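/- (Corollary 5, fixed λ2 asymptotic.) Let W(t,v) = (h₃(v)t³+h₂(v)t²+h₁(v)t+h₀(v))·((1−v)⁷(1+v)⁴(1+v²)(1−t)³(1+t)(1−vt))^{-1} ∈ ℚ[[t,v]], with h₃(v) = v²(v⁴−v³+3v²−v+1), h₂(v) = v(2v⁴−4v³+v²−v−1), h₁(v) = v(−v⁴−v³+v²−4v+2), h₀(v) = v⁴−v³+3v²−v+1, and for λ1 ≥ λ2 ≥ 0 let m(λ1,λ2) be the coefficient of t^{λ1−λ2}v^{λ2} in W. Then for each fixed integer λ2 ≥ 0 there exists a constant C > 0 such that for all integers λ1 > 2λ2: |m(λ1,λ2) − λ1²·( λ2⁵/(5!·2⁴) + λ2⁴/(2⁵·3) + 5λ2³/2⁶ + 13λ2²/(4!·2) + 1633λ2/(5!·2⁵) + 15/2⁶ + (−1)^{λ2}·(λ2/2⁸ + 1/2⁶) )| ≤ C·(λ1+1). -/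

import Mathlib

open Finset

abbrev Q2 : Type := MvPowerSeries (Fin 2) ℚ

noncomputable def Xv (i : Fin 2) : Q2 := MvPowerSeries.X i

noncomputable def mon (i j : ℕ) : Fin 2 →₀ ℕ := Finsupp.single 0 i + Finsupp.single 1 j

noncomputable def c (i j : ℕ) (f : Q2) : ℚ := MvPowerSeries.coeff (mon i j) f

/-- Schur function S_{(l1,l2)}(x,y) for l1 ≥ l2. -/
noncomputable def schur (l1 l2 : ℕ) : Q2 :=
  (Xv 0 * Xv 1) ^ l2 * ∑ i ∈ range (l1 - l2 + 1), Xv 0 ^ i * Xv 1 ^ (l1 - l2 - i)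

/-- f = Σ_{l1 ≥ l2 ≥ 0} m(l1,l2) · S_{(l1,l2)}, expressed coefficientwise
(each coefficient receives only finitely many contributions, since `schur l1 l2`
is homogeneous of degree `l1 + l2`). -/
def IsSchurExpansion (m : ℕ → ℕ → ℚ) (f : Q2) : Prop :=
  ∀ i j : ℕ, c i j f =
    ∑ l1 ∈ range (i + j + 1), ∑ l2 ∈ range (l1 + 1), m l1 l2 * c i j (schur l1 l2)

/-- h(t,v) = Σ_{l1 ≥ l2 ≥ 0} m(l1,l2) t^{l1-l2} v^{l2}, the multiplicity series. -/
def IsMultSeries (m : ℕ → ℕ → ℚ) (h : Q2) : Prop :=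
  ∀ p q : ℕ, c p q h = m (p + q) q

/-- Substitution of φ0, φ1 (series with zero constant term) for the two variables of h:
the coefficient of a monomial e in h(φ0,φ1) only receives contributions from monomials
t^p v^q of h with p + q ≤ |e|. -/
noncomputable def subst2 (φ0 φ1 h : Q2) : Q2 :=
  fun e => ∑ p ∈ range (e 0 + e 1 + 1), ∑ q ∈ range (e 0 + e 1 + 1),
    MvPowerSeries.coeff (mon p q) h * MvPowerSeries.coeff e (φ0 ^ p * φ1 ^ q)

/-- Substitution of a series φ with zero constant term into a one-variable series a. -/
noncomputable def substP (φ : Q2) (a : PowerSeries ℚ) : Q2 :=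
  fun e => ∑ k ∈ range (e 0 + e 1 + 1),
    PowerSeries.coeff k a * MvPowerSeries.coeff e (φ ^ k)

/-- Hilbert series of the mixed trace algebra T₂ of two generic 3×3 matrices
(Berele–Stembridge), with x = Xv 0, y = Xv 1. -/
noncomputable def Hseries : Q2 :=
  ((1 - Xv 0) ^ 2 * (1 - Xv 1) ^ 2 * (1 - Xv 0 ^ 2) * (1 - Xv 1 ^ 2)
    * (1 - Xv 0 * Xv 1) ^ 2 * (1 - Xv 0 ^ 2 * Xv 1) * (1 - Xv 0 * Xv 1 ^ 2))⁻¹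

/-- W(t,v), the multiplicity series of Theorem 2, with t = Xv 0, v = Xv 1;
h₃(v) = v²(v⁴−v³+3v²−v+1), h₂(v) = v(2v⁴−4v³+v²−v−1),
h₁(v) = v(−v⁴−v³+v²−4v+2), h₀(v) = v⁴−v³+3v²−v+1. -/
noncomputable def Wseries : Q2 :=
  (Xv 1 ^ 2 * (Xv 1 ^ 4 - Xv 1 ^ 3 + 3 * Xv 1 ^ 2 - Xv 1 + 1) * Xv 0 ^ 3
    + Xv 1 * (2 * Xv 1 ^ 4 - 4 * Xv 1 ^ 3 + Xv 1 ^ 2 - Xv 1 - 1) * Xv 0 ^ 2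
    + Xv 1 * (-Xv 1 ^ 4 - Xv 1 ^ 3 + Xv 1 ^ 2 - 4 * Xv 1 + 2) * Xv 0
    + (Xv 1 ^ 4 - Xv 1 ^ 3 + 3 * Xv 1 ^ 2 - Xv 1 + 1))
  * ((1 - Xv 1) ^ 7 * (1 + Xv 1) ^ 4 * (1 + Xv 1 ^ 2)
      * (1 - Xv 0) ^ 3 * (1 + Xv 0) * (1 - Xv 1 * Xv 0))⁻¹

lemma mon_apply0 (i j : ℕ) : (mon i j) 0 = i := by
  simp [mon, Finsupp.single_apply]

lemma mon_apply1 (i j : ℕ) : (mon i j) 1 = j := by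
  simp [mon, Finsupp.single_apply]

lemma mon_eq_iff (e : Fin 2 →₀ ℕ) (a b : ℕ) : e = mon a b ↔ e 0 = a ∧ e 1 = b := by
  constructor
  · rintro rfl; exact ⟨mon_apply0 a b, mon_apply1 a b⟩
  · rintro ⟨h0, h1⟩
    ext x
    fin_cases x
    · simpa [mon_apply0] using h0
    · simpa [mon_apply1] using h1

lemma eq_mon (e : Fin 2 →₀ ℕ) : e = mon (e 0) (e 1) :=
  (mon_eq_iff e _ _).mpr ⟨rfl, rfl⟩

lemma mon_add (a b a' b' : ℕ) : mon a b + mon a' b' = mon (a+a') (b+b') := by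
  rw [mon_eq_iff]
  simp [mon_apply0, mon_apply1]

lemma mon_inj {a b a' b' : ℕ} : mon a b = mon a' b' ↔ a = a' ∧ b = b' := by
  rw [mon_eq_iff, mon_apply0, mon_apply1]

lemma mon_zero : mon 0 0 = 0 := by
  have : (0 : Fin 2 →₀ ℕ) = mon 0 0 := by rw [mon_eq_iff]; simp
  exact this.symm

lemma c_mul (f g : Q2) (p q : ℕ) :
    c p q (f * g) = ∑ i ∈ range (p+1), ∑ j ∈ range (q+1), c i j f * c (p-i) (q-j) g := by
  classical
  rw [c, MvPowerSeries.coeff_mul]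
  rw [← Finset.sum_product']
  apply Finset.sum_nbij' (fun x => (x.1 0, x.1 1))
    (fun y => ((mon y.1 y.2 : Fin 2 →₀ ℕ), (mon (p - y.1) (q - y.2) : Fin 2 →₀ ℕ)))
  · intro x hx
    rw [HasAntidiagonal.mem_antidiagonal] at hx
    have h0 : x.1 0 + x.2 0 = p := by
      have := congrArg (fun f => f 0) hx; simpa [mon_apply0] using this
    have h1 : x.1 1 + x.2 1 = q := by
      have := congrArg (fun f => f 1) hx; simpa [mon_apply1] using this
    simp only [Finset.mem_product, Finset.mem_range]
    omega
  · intro y hy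
    simp only [Finset.mem_product, Finset.mem_range] at hy
    rw [HasAntidiagonal.mem_antidiagonal, mon_add, mon_inj]
    omega
  · intro x hx
    rw [HasAntidiagonal.mem_antidiagonal] at hx
    have h0 : x.1 0 + x.2 0 = p := by
      have := congrArg (fun f => f 0) hx; simpa [mon_apply0] using this
    have h1 : x.1 1 + x.2 1 = q := by
      have := congrArg (fun f => f 1) hx; simpa [mon_apply1] using this
    have e1 : x.1 = mon (x.1 0) (x.1 1) := eq_mon _
    have e2 : x.2 = mon (p - x.1 0) (q - x.1 1) := by
      rw [mon_eq_iff]; omega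
    exact Prod.ext e1.symm e2.symm
  · intro y hy
    simp [mon_apply0, mon_apply1]
  · intro x hx
    rw [HasAntidiagonal.mem_antidiagonal] at hx
    have h0 : x.1 0 + x.2 0 = p := by
      have := congrArg (fun f => f 0) hx; simpa [mon_apply0] using this
    have h1 : x.1 1 + x.2 1 = q := by
      have := congrArg (fun f => f 1) hx; simpa [mon_apply1] using this
    have e1 : x.1 = mon (x.1 0) (x.1 1) := eq_mon _
    have e2 : x.2 = mon (p - x.1 0) (q - x.1 1) := by
      rw [mon_eq_iff]; omega
    rw [c, c, ← e1, ← e2]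

noncomputable def T (r : ℚ) (a b : ℕ) : Q2 := (MvPowerSeries.C r : Q2) * Xv 0 ^ a * Xv 1 ^ b

lemma c_T (r : ℚ) (a b i j : ℕ) : c i j (T r a b) = if i = a ∧ j = b then r else 0 := by
  classical
  have hT : T r a b = MvPowerSeries.monomial (mon a b) r := by
    rw [T, Xv, Xv, MvPowerSeries.X_pow_eq, MvPowerSeries.X_pow_eq,
      ← MvPowerSeries.monomial_zero_eq_C_apply, MvPowerSeries.monomial_mul_monomial,
      MvPowerSeries.monomial_mul_monomial, mul_one, mul_one, zero_add, mon]
  rw [c, hT, MvPowerSeries.coeff_monomial]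
  by_cases h : i = a ∧ j = b
  · obtain ⟨rfl, rfl⟩ := h; simp
  · rw [if_neg h, if_neg]
    intro hm
    exact h (mon_inj.mp hm)

lemma c_mul_T (r : ℚ) (a b : ℕ) (f : Q2) (p q : ℕ) :
    c p q (T r a b * f) = if a ≤ p ∧ b ≤ q then r * c (p-a) (q-b) f else 0 := by
  classical
  rw [c_mul, ← Finset.sum_product']
  have step : ∀ x ∈ range (p+1) ×ˢ range (q+1),
      c x.1 x.2 (T r a b) * c (p-x.1) (q-x.2) f
        = if x = ((a, b) : ℕ × ℕ) then r * c (p-x.1) (q-x.2) f else 0 := by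
    intro x _
    rw [c_T]
    by_cases h : x = ((a, b) : ℕ × ℕ)
    · subst h; simp
    · have h' : ¬(x.1 = a ∧ x.2 = b) := by
        rintro ⟨h1, h2⟩; exact h (Prod.ext h1 h2)
      rw [if_neg h', if_neg h, zero_mul]
  rw [Finset.sum_congr rfl step, Finset.sum_ite_eq' (range (p+1) ×ˢ range (q+1))
    ((a, b) : ℕ × ℕ) (fun x => r * c (p-x.1) (q-x.2) f)]
  simp only [Finset.mem_product, Finset.mem_range]
  by_cases h : a ≤ p ∧ b ≤ q
  · rw [if_pos (by omega), if_pos h]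
  · rw [if_neg (by omega), if_neg h]

noncomputable def Vbig : Q2 := (1 - Xv 1) ^ 7 * (1 + Xv 1) ^ 4 * (1 + Xv 1 ^ 2)
noncomputable def Dt : Q2 := (1 - Xv 0) ^ 3 * (1 + Xv 0) * (1 - Xv 1 * Xv 0)
noncomputable def NumPoly : Q2 :=
  Xv 1 ^ 2 * (Xv 1 ^ 4 - Xv 1 ^ 3 + 3 * Xv 1 ^ 2 - Xv 1 + 1) * Xv 0 ^ 3
    + Xv 1 * (2 * Xv 1 ^ 4 - 4 * Xv 1 ^ 3 + Xv 1 ^ 2 - Xv 1 - 1) * Xv 0 ^ 2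
    + Xv 1 * (-Xv 1 ^ 4 - Xv 1 ^ 3 + Xv 1 ^ 2 - 4 * Xv 1 + 2) * Xv 0
    + (Xv 1 ^ 4 - Xv 1 ^ 3 + 3 * Xv 1 ^ 2 - Xv 1 + 1)

lemma Dt_expand : Dt = T 1 0 0 + T (-2) 1 0 + T (-1) 1 1 + T 2 2 1 + T 2 3 0
    + T (-1) 4 0 + T (-2) 4 1 + T 1 5 1 := by
  simp only [Dt, T, map_neg, map_ofNat, map_one]
  ring

lemma Vbig_expand : Vbig = T (1) 0 0 + T (-3) 0 1 + T (8) 0 3 + T (-7) 0 4 + T (-3) 0 5 + T (8) 0 6 + T (-8) 0 7 + T (3) 0 8 + T (7) 0 9 + T (-8) 0 10 + T (3) 0 12 + T (-1) 0 13 := by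
  simp only [Vbig, T, map_neg, map_ofNat, map_one]
  ring

lemma Num_expand : NumPoly = T (1) 0 0 + T (-1) 0 1 + T (3) 0 2 + T (-1) 0 3 + T (1) 0 4 + T (2) 1 1 + T (-4) 1 2 + T (1) 1 3 + T (-1) 1 4 + T (-1) 1 5 + T (-1) 2 1 + T (-1) 2 2 + T (1) 2 3 + T (-4) 2 4 + T (2) 2 5 + T (1) 3 2 + T (-1) 3 3 + T (3) 3 4 + T (-1) 3 5 + T (1) 3 6 := by
  simp only [NumPoly, T, map_neg, map_ofNat, map_one]
  ring

noncomputable def Wser : Q2 :=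
  (Xv 1 ^ 2 * (Xv 1 ^ 4 - Xv 1 ^ 3 + 3 * Xv 1 ^ 2 - Xv 1 + 1) * Xv 0 ^ 3
    + Xv 1 * (2 * Xv 1 ^ 4 - 4 * Xv 1 ^ 3 + Xv 1 ^ 2 - Xv 1 - 1) * Xv 0 ^ 2
    + Xv 1 * (-Xv 1 ^ 4 - Xv 1 ^ 3 + Xv 1 ^ 2 - 4 * Xv 1 + 2) * Xv 0
    + (Xv 1 ^ 4 - Xv 1 ^ 3 + 3 * Xv 1 ^ 2 - Xv 1 + 1))
  * ((1 - Xv 1) ^ 7 * (1 + Xv 1) ^ 4 * (1 + Xv 1 ^ 2)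
      * (1 - Xv 0) ^ 3 * (1 + Xv 0) * (1 - Xv 1 * Xv 0))⁻¹

lemma constCoeff_Vbig : MvPowerSeries.constantCoeff Vbig = 1 := by
  simp [Vbig, Xv]

lemma constCoeff_Dt : MvPowerSeries.constantCoeff Dt = 1 := by
  simp [Dt, Xv]

lemma Wser_eq : Wser = (NumPoly * Vbig⁻¹) * Dt⁻¹ := by
  have harg : (1 - Xv 1) ^ 7 * (1 + Xv 1) ^ 4 * (1 + Xv 1 ^ 2)
      * (1 - Xv 0) ^ 3 * (1 + Xv 0) * (1 - Xv 1 * Xv 0) = Vbig * Dt := by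
    rw [Vbig, Dt]; ring
  rw [Wser, harg, MvPowerSeries.mul_inv_rev]
  rw [show (Xv 1 ^ 2 * (Xv 1 ^ 4 - Xv 1 ^ 3 + 3 * Xv 1 ^ 2 - Xv 1 + 1) * Xv 0 ^ 3
    + Xv 1 * (2 * Xv 1 ^ 4 - 4 * Xv 1 ^ 3 + Xv 1 ^ 2 - Xv 1 - 1) * Xv 0 ^ 2
    + Xv 1 * (-Xv 1 ^ 4 - Xv 1 ^ 3 + Xv 1 ^ 2 - 4 * Xv 1 + 2) * Xv 0
    + (Xv 1 ^ 4 - Xv 1 ^ 3 + 3 * Xv 1 ^ 2 - Xv 1 + 1)) = NumPoly from rfl]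
  ring

def neg1 (n : ℤ) : ℚ := if Even n then 1 else -1

lemma neg1_add (m n : ℤ) : neg1 (m + n) = neg1 m * neg1 n := by
  unfold neg1
  by_cases hm : Even m <;> by_cases hn : Even n <;>
    simp [Int.even_add, hm, hn]

lemma neg1_abs (n : ℤ) : |neg1 n| ≤ 1 := by
  unfold neg1; split <;> norm_num

noncomputable def bz (n : ℤ) : ℚ :=
  if -3 ≤ n then ((n : ℚ) + 1) * ((n : ℚ) + 3) / 4 + (1 + neg1 n) / 8 else 0

lemma bz_neg {n : ℤ} (h : n ≤ -1) : bz n = 0 := by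
  unfold bz
  by_cases h3 : -3 ≤ n
  · rw [if_pos h3]
    interval_cases n <;> norm_num [neg1, Int.even_iff]
  · rw [if_neg h3]

lemma neg1_neg_one : neg1 (-1) = -1 := by norm_num [neg1, Int.even_iff]
lemma neg1_neg_three : neg1 (-3) = -1 := by norm_num [neg1, Int.even_iff]
lemma neg1_neg_four : neg1 (-4) = 1 := by norm_num [neg1, Int.even_iff]

lemma bz_rec (n : ℤ) : bz n - 2 * bz (n-1) + 2 * bz (n-3) - bz (n-4)
    = if n = 0 then 1 else 0 := by
  rcases lt_trichotomy n 0 with h | rfl | h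
  · rw [bz_neg (by omega), bz_neg (by omega), bz_neg (by omega), bz_neg (by omega),
      if_neg (by omega)]
    ring
  · rw [bz_neg (by omega : (0:ℤ)-1 ≤ -1), bz_neg (by omega : (0:ℤ)-3 ≤ -1),
      bz_neg (by omega : (0:ℤ)-4 ≤ -1), if_pos rfl]
    norm_num [bz, neg1]
  · rw [if_neg (by omega)]
    unfold bz
    rw [if_pos (by omega), if_pos (by omega), if_pos (by omega), if_pos (by omega)]
    have e1 : neg1 (n - 1) = neg1 n * (-1) := by
      rw [show n - 1 = n + (-1) by ring, neg1_add, neg1_neg_one]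
    have e3 : neg1 (n - 3) = neg1 n * (-1) := by
      rw [show n - 3 = n + (-3) by ring, neg1_add, neg1_neg_three]
    have e4 : neg1 (n - 4) = neg1 n := by
      rw [show n - 4 = n + (-4) by ring, neg1_add, neg1_neg_four, mul_one]
    rw [e1, e3, e4]
    push_cast
    ring

noncomputable def B : Q2 := fun e => bz ((e 0 : ℤ) - (e 1 : ℤ))

lemma c_B (p q : ℕ) : c p q B = bz ((p:ℤ) - (q:ℤ)) := by
  rw [c, MvPowerSeries.coeff_apply, B, mon_apply0, mon_apply1]

lemma c_add (f g : Q2) (p q : ℕ) : c p q (f + g) = c p q f + c p q g := by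
  simp [c, map_add]

lemma c_one (p q : ℕ) : c p q 1 = if p = 0 ∧ q = 0 then 1 else 0 := by
  classical
  rw [c, MvPowerSeries.coeff_one]
  by_cases h : p = 0 ∧ q = 0
  · obtain ⟨rfl, rfl⟩ := h; simp [mon_zero]
  · rw [if_neg h, if_neg]
    intro hm
    rw [← mon_zero] at hm
    exact h (mon_inj.mp hm)

lemma Q2_ext {f g : Q2} (h : ∀ p q, c p q f = c p q g) : f = g := by
  apply MvPowerSeries.ext
  intro n
  have := h (n 0) (n 1)
  rwa [c, c, ← eq_mon n] at this

lemma guard_bz (r : ℚ) (a b p q : ℕ) (hb : b ≤ q) :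
    (if a ≤ p ∧ b ≤ q then r * bz (((p-a : ℕ) : ℤ) - ((q-b : ℕ) : ℤ)) else 0)
      = r * bz ((p:ℤ) - (q:ℤ) - (a:ℤ) + (b:ℤ)) := by
  by_cases ha : a ≤ p
  · rw [if_pos ⟨ha, hb⟩]
    have : ((p-a : ℕ) : ℤ) - ((q-b : ℕ) : ℤ) = (p:ℤ) - (q:ℤ) - (a:ℤ) + (b:ℤ) := by omega
    rw [this]
  · rw [if_neg (by tauto), bz_neg (by omega), mul_zero]

lemma Dt_mul_B : Dt * B = 1 := by
  apply Q2_ext; intro p q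
  rw [Dt_expand, add_mul, add_mul, add_mul, add_mul, add_mul, add_mul, add_mul,
    c_add, c_add, c_add, c_add, c_add, c_add, c_add,
    c_mul_T, c_mul_T, c_mul_T, c_mul_T, c_mul_T, c_mul_T, c_mul_T, c_mul_T, c_one]
  simp only [c_B]
  rcases q with _ | q'
  · rw [guard_bz 1 0 0 p 0 (le_refl 0), guard_bz (-2) 1 0 p 0 (le_refl 0),
      guard_bz 2 3 0 p 0 (le_refl 0), guard_bz (-1) 4 0 p 0 (le_refl 0),
      if_neg (by omega : ¬(1 ≤ p ∧ 1 ≤ 0)), if_neg (by omega : ¬(2 ≤ p ∧ 1 ≤ 0)),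
      if_neg (by omega : ¬(4 ≤ p ∧ 1 ≤ 0)), if_neg (by omega : ¬(5 ≤ p ∧ 1 ≤ 0))]
    by_cases hp : p = 0
    · subst hp
      rw [if_pos ⟨rfl, rfl⟩]
      have h := bz_rec 0
      norm_num at h ⊢
      linear_combination h
    · rw [if_neg (by tauto)]
      have h := bz_rec (p:ℤ)
      rw [if_neg (by exact_mod_cast hp)] at h
      push_cast
      simp only [sub_zero, add_zero]
      linear_combination h
  · rw [guard_bz 1 0 0 p (q'+1) (by omega), guard_bz (-2) 1 0 p (q'+1) (by omega),
      guard_bz 2 3 0 p (q'+1) (by omega), guard_bz (-1) 4 0 p (q'+1) (by omega),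
      guard_bz (-1) 1 1 p (q'+1) (by omega), guard_bz 2 2 1 p (q'+1) (by omega),
      guard_bz (-2) 4 1 p (q'+1) (by omega), guard_bz 1 5 1 p (q'+1) (by omega),
      if_neg (by omega : ¬(p = 0 ∧ q' + 1 = 0))]
    push_cast
    simp only [sub_zero, add_zero]
    have e1 : (p:ℤ) - (↑q' + 1) - 1 + 1 = (p:ℤ) - (↑q' + 1) := by ring
    have e2 : (p:ℤ) - (↑q' + 1) - 2 + 1 = (p:ℤ) - (↑q' + 1) - 1 := by ring
    have e3 : (p:ℤ) - (↑q' + 1) - 4 + 1 = (p:ℤ) - (↑q' + 1) - 3 := by ring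
    have e4 : (p:ℤ) - (↑q' + 1) - 5 + 1 = (p:ℤ) - (↑q' + 1) - 4 := by ring
    rw [e1, e2, e3, e4]
    ring

lemma Dt_inv : Dt⁻¹ = B := by
  rw [MvPowerSeries.inv_eq_iff_mul_eq_one (by rw [constCoeff_Dt]; norm_num)]
  rw [mul_comm]; exact Dt_mul_B

def dcoef (j : ℕ) : ℚ :=
  if j = 0 then 1 else if j = 1 then -3 else if j = 3 then 8 else if j = 4 then -7
  else if j = 5 then -3 else if j = 6 then 8 else if j = 7 then -8 else if j = 8 then 3
  else if j = 9 then 7 else if j = 10 then -8 else if j = 12 then 3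
  else if j = 13 then -1 else 0

lemma c_mul_Vbig (f : Q2) (p q : ℕ) :
    c p q (f * Vbig) = ∑ j ∈ range 14, (if j ≤ q then dcoef j * c p (q-j) f else 0) := by
  rw [mul_comm, Vbig_expand]
  rw [add_mul, add_mul, add_mul, add_mul, add_mul, add_mul, add_mul, add_mul, add_mul,
    add_mul, add_mul]
  rw [c_add, c_add, c_add, c_add, c_add, c_add, c_add, c_add, c_add, c_add, c_add]
  rw [c_mul_T, c_mul_T, c_mul_T, c_mul_T, c_mul_T, c_mul_T, c_mul_T, c_mul_T, c_mul_T,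
    c_mul_T, c_mul_T, c_mul_T]
  simp only [Finset.sum_range_succ, Finset.sum_range_zero, dcoef]
  norm_num

noncomputable def np (i q : ℕ) : ℚ := (if i = 0 ∧ q = 0 then (1 : ℚ) else 0) + (if i = 0 ∧ q = 1 then (-1 : ℚ) else 0) + (if i = 0 ∧ q = 2 then (3 : ℚ) else 0) + (if i = 0 ∧ q = 3 then (-1 : ℚ) else 0) + (if i = 0 ∧ q = 4 then (1 : ℚ) else 0) + (if i = 1 ∧ q = 1 then (2 : ℚ) else 0) + (if i = 1 ∧ q = 2 then (-4 : ℚ) else 0) + (if i = 1 ∧ q = 3 then (1 : ℚ) else 0) + (if i = 1 ∧ q = 4 then (-1 : ℚ) else 0) + (if i = 1 ∧ q = 5 then (-1 : ℚ) else 0) + (if i = 2 ∧ q = 1 then (-1 : ℚ) else 0) + (if i = 2 ∧ q = 2 then (-1 : ℚ) else 0) + (if i = 2 ∧ q = 3 then (1 : ℚ) else 0) + (if i = 2 ∧ q = 4 then (-4 : ℚ) else 0) + (if i = 2 ∧ q = 5 then (2 : ℚ) else 0) + (if i = 3 ∧ q = 2 then (1 : ℚ) else 0) + (if i = 3 ∧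 q = 3 then (-1 : ℚ) else 0) + (if i = 3 ∧ q = 4 then (3 : ℚ) else 0) + (if i = 3 ∧ q = 5 then (-1 : ℚ) else 0) + (if i = 3 ∧ q = 6 then (1 : ℚ) else 0)

lemma c_NumPoly (i q : ℕ) : c i q NumPoly = np i q := by
  rw [Num_expand]
  rw [c_add, c_add, c_add, c_add, c_add, c_add, c_add, c_add, c_add, c_add, c_add, c_add, c_add, c_add, c_add, c_add, c_add, c_add, c_add]
  rw [c_T, c_T, c_T, c_T, c_T, c_T, c_T, c_T, c_T, c_T, c_T, c_T, c_T, c_T, c_T, c_T, c_T, c_T, c_T, c_T]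
  rfl

lemma constCoeff_Vbig_ne : MvPowerSeries.constantCoeff Vbig ≠ 0 := by
  rw [constCoeff_Vbig]; norm_num

noncomputable def U : Q2 := NumPoly * Vbig⁻¹

lemma U_mul_Vbig : U * Vbig = NumPoly := by
  rw [U, mul_assoc, MvPowerSeries.inv_mul_cancel _ constCoeff_Vbig_ne, mul_one]

lemma Vinv_mul_Vbig : Vbig⁻¹ * Vbig = 1 :=
  MvPowerSeries.inv_mul_cancel _ constCoeff_Vbig_ne

lemma Vonly (p q : ℕ) (hp : 1 ≤ p) : c p q (Vbig⁻¹) = 0 := by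
  induction q using Nat.strong_induction_on with
  | _ q ih =>
    have h1 : c p q (Vbig⁻¹ * Vbig) = c p q 1 := by rw [Vinv_mul_Vbig]
    rw [c_mul_Vbig, c_one, if_neg (by omega)] at h1
    rw [Finset.sum_range_succ'] at h1
    simp only [Nat.sub_zero] at h1
    rw [if_pos (Nat.zero_le q)] at h1
    have hz : ∀ j ∈ range 13, (if j + 1 ≤ q then dcoef (j+1) * c p (q-(j+1)) (Vbig⁻¹) else 0) = 0 := by
      intro j _
      by_cases hj : j + 1 ≤ q
      · rw [if_pos hj, ih (q - (j+1)) (by omega), mul_zero]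
      · rw [if_neg hj]
    rw [Finset.sum_congr rfl hz, Finset.sum_const, smul_zero, zero_add] at h1
    have : dcoef 0 = 1 := by norm_num [dcoef]
    rw [this, one_mul] at h1
    exact h1

noncomputable def uu (i k : ℕ) : ℚ := c i k U

lemma np_ge4 (i q : ℕ) (hi : 4 ≤ i) : np i q = 0 := by
  have h0 : i ≠ 0 := by omega
  have h1 : i ≠ 1 := by omega
  have h2 : i ≠ 2 := by omega
  have h3 : i ≠ 3 := by omega
  simp [np, h0, h1, h2, h3]

lemma uu_ge4 (i k : ℕ) (hi : 4 ≤ i) : uu i k = 0 := by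
  rw [uu, U, c_mul]
  apply Finset.sum_eq_zero
  intro a ha
  apply Finset.sum_eq_zero
  intro b hb
  rw [Finset.mem_range] at ha
  by_cases hai : a = i
  · subst hai
    rw [c_NumPoly, np_ge4 a b hi, zero_mul]
  · rw [Vonly (i - a) (k - b) (by omega), mul_zero]

lemma uu_rec (i q : ℕ) :
    ∑ j ∈ range 14, (if j ≤ q then dcoef j * uu i (q-j) else 0) = np i q := by
  have h := U_mul_Vbig
  have h2 : c i q (U * Vbig) = c i q NumPoly := by rw [h]
  rw [c_mul_Vbig, c_NumPoly] at h2
  exact h2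

noncomputable def us (k : ℕ) : ℚ := ∑ i ∈ range 4, uu i k
noncomputable def ss (q : ℕ) : ℚ := ∑ k ∈ range (q+1), us k

def rr (q : ℕ) : ℚ :=
  if q = 0 then 1 else if q = 2 then -1 else if q = 4 then -1 else if q = 6 then 1 else 0

lemma rr_eq (q : ℕ) : ∑ i ∈ range 4, np i q = rr q := by
  by_cases hq : q ≤ 6
  · interval_cases q <;> norm_num [np, rr, Finset.sum_range_succ]
  · have h0 : q ≠ 0 := by omega
    have h1 : q ≠ 1 := by omega
    have h2 : q ≠ 2 := by omega
    have h3 : q ≠ 3 := by omega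
    have h4 : q ≠ 4 := by omega
    have h5 : q ≠ 5 := by omega
    have h6 : q ≠ 6 := by omega
    simp [np, rr, h0, h1, h2, h3, h4, h5, h6]

lemma us_rec (q : ℕ) :
    ∑ j ∈ range 14, (if j ≤ q then dcoef j * us (q-j) else 0) = rr q := by
  have h : ∑ i ∈ range 4, ∑ j ∈ range 14, (if j ≤ q then dcoef j * uu i (q-j) else 0)
      = ∑ i ∈ range 4, np i q := Finset.sum_congr rfl (fun i _ => uu_rec i q)
  rw [rr_eq] at h
  rw [← h, Finset.sum_comm]
  apply Finset.sum_congr rfl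
  intro j _
  by_cases hj : j ≤ q
  · simp only [if_pos hj, us, Finset.mul_sum]
  · simp only [if_neg hj, Finset.sum_const, smul_zero]

lemma sum_shift (f : ℕ → ℚ) (j : ℕ) : ∀ q : ℕ,
    ∑ q' ∈ range (q+1), (if j ≤ q' then f (q'-j) else 0)
      = if j ≤ q then ∑ k ∈ range (q-j+1), f k else 0 := by
  intro q
  induction q with
  | zero =>
    rcases Nat.eq_zero_or_pos j with rfl | hj
    · simp
    · rw [Finset.sum_range_one, if_neg (by omega), if_neg (by omega)]
  | succ q ih =>
    rw [Finset.sum_range_succ, ih]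
    by_cases hj : j ≤ q
    · rw [if_pos hj, if_pos (by omega), if_pos (by omega)]
      have : q + 1 - j = (q - j) + 1 := by omega
      rw [this, Finset.sum_range_succ, Finset.sum_range_succ, Finset.sum_range_succ]
    · by_cases hj1 : j = q + 1
      · subst hj1
        rw [if_neg hj, if_pos (le_refl _), if_pos (le_refl _)]
        simp
      · rw [if_neg hj, if_neg (by omega), if_neg (by omega), add_zero]

def Ns (q : ℕ) : ℚ :=
  if q = 0 then 1 else if q = 1 then 1 else if q = 4 then -1 else if q = 5 then -1 else 0

lemma Ns_eq (q : ℕ) : ∑ q' ∈ range (q+1), rr q' = Ns q := by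
  induction q with
  | zero => norm_num [rr, Ns]
  | succ q ih =>
    rw [Finset.sum_range_succ, ih]
    by_cases hq : q ≤ 6
    · interval_cases q <;> norm_num [rr, Ns]
    · have e1 : rr (q+1) = 0 := by
        have h0 : q+1 ≠ 0 := by omega
        have h2 : q+1 ≠ 2 := by omega
        have h4 : q+1 ≠ 4 := by omega
        have h6 : q+1 ≠ 6 := by omega
        simp [rr, h0, h2, h4, h6]
      have e2 : Ns q = 0 := by
        have h0 : q ≠ 0 := by omega
        have h1 : q ≠ 1 := by omega
        have h4 : q ≠ 4 := by omega
        have h5 : q ≠ 5 := by omega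
        simp [Ns, h0, h1, h4, h5]
      have e3 : Ns (q+1) = 0 := by
        have h0 : q+1 ≠ 0 := by omega
        have h1 : q+1 ≠ 1 := by omega
        have h4 : q+1 ≠ 4 := by omega
        have h5 : q+1 ≠ 5 := by omega
        simp only [Ns, if_neg h0, if_neg h1, if_neg h4, if_neg h5]
      rw [e1, e2, e3, add_zero]

lemma ss_rec (q : ℕ) :
    ∑ j ∈ range 14, (if j ≤ q then dcoef j * ss (q-j) else 0) = Ns q := by
  have h : ∑ q' ∈ range (q+1), ∑ j ∈ range 14, (if j ≤ q' then dcoef j * us (q'-j) else 0)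
      = ∑ q' ∈ range (q+1), rr q' := Finset.sum_congr rfl (fun q' _ => us_rec q')
  rw [Ns_eq] at h
  rw [← h, Finset.sum_comm]
  apply Finset.sum_congr rfl
  intro j _
  rw [sum_shift (fun k => dcoef j * us k) j q]
  by_cases hj : j ≤ q
  · rw [if_pos hj, if_pos hj, ← Finset.mul_sum, ss]
  · rw [if_neg hj, if_neg hj]

noncomputable def PP (n : ℕ) : ℚ :=
  (n : ℚ) ^ 5 / 1920 + (n : ℚ) ^ 4 / 96 + 5 * (n : ℚ) ^ 3 / 64 + 13 * (n : ℚ) ^ 2 / 48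
    + 1633 * (n : ℚ) / 3840 + 15 / 64 + (-1 : ℚ) ^ n * ((n : ℚ) / 256 + 1 / 64)

set_option maxHeartbeats 3200000 in
lemma key_identity (q : ℕ) :
    ∑ j ∈ range 14, (if j ≤ q then dcoef j * (4 * PP (q-j)) else 0) = Ns q := by
  by_cases hq : q ≤ 12
  · interval_cases q <;> norm_num [dcoef, PP, Ns, Finset.sum_range_succ]
  · obtain ⟨m, rfl⟩ : ∃ m, q = m + 13 := ⟨q - 13, by omega⟩
    have hNs : Ns (m + 13) = 0 := by
      have h0 : m+13 ≠ 0 := by omega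
      have h1 : m+13 ≠ 1 := by omega
      have h4 : m+13 ≠ 4 := by omega
      have h5 : m+13 ≠ 5 := by omega
      simp [Ns, h0, h1, h4, h5]
    rw [hNs]
    simp only [Finset.sum_range_succ, Finset.sum_range_zero]
    rw [if_pos (by omega : 0 ≤ m+13), if_pos (by omega : 1 ≤ m+13),
      if_pos (by omega : 2 ≤ m+13), if_pos (by omega : 3 ≤ m+13),
      if_pos (by omega : 4 ≤ m+13), if_pos (by omega : 5 ≤ m+13),
      if_pos (by omega : 6 ≤ m+13), if_pos (by omega : 7 ≤ m+13),
      if_pos (by omega : 8 ≤ m+13), if_pos (by omega : 9 ≤ m+13),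
      if_pos (by omega : 10 ≤ m+13), if_pos (by omega : 11 ≤ m+13),
      if_pos (by omega : 12 ≤ m+13), if_pos (by omega : 13 ≤ m+13)]
    rw [show m + 13 - 0 = m + 13 from by omega, show m + 13 - 1 = m + 12 from by omega,
      show m + 13 - 2 = m + 11 from by omega, show m + 13 - 3 = m + 10 from by omega,
      show m + 13 - 4 = m + 9 from by omega, show m + 13 - 5 = m + 8 from by omega,
      show m + 13 - 6 = m + 7 from by omega, show m + 13 - 7 = m + 6 from by omega,
      show m + 13 - 8 = m + 5 from by omega, show m + 13 - 9 = m + 4 from by omega,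
      show m + 13 - 10 = m + 3 from by omega, show m + 13 - 11 = m + 2 from by omega,
      show m + 13 - 12 = m + 1 from by omega, show m + 13 - 13 = m from by omega]
    simp only [PP, pow_add]
    rcases Nat.even_or_odd m with hm | hm
    · simp only [hm.neg_one_pow]
      push_cast
      norm_num [dcoef]
      ring
    · simp only [hm.neg_one_pow]
      push_cast
      norm_num [dcoef]
      ring

lemma ss_eq (q : ℕ) : ss q = 4 * PP q := by
  induction q using Nat.strong_induction_on with
  | _ q ih =>
    have key : ∑ j ∈ range 14, (if j ≤ q then dcoef j * ss (q-j) else 0)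
        = ∑ j ∈ range 14, (if j ≤ q then dcoef j * (4 * PP (q-j)) else 0) := by
      rw [ss_rec, key_identity]
    rw [Finset.sum_range_succ' (fun j => if j ≤ q then dcoef j * ss (q-j) else 0) 13,
      Finset.sum_range_succ' (fun j => if j ≤ q then dcoef j * (4 * PP (q-j)) else 0) 13] at key
    simp only [Nat.sub_zero, if_pos (Nat.zero_le q)] at key
    have hz : ∀ j ∈ range 13,
        (if j+1 ≤ q then dcoef (j+1) * ss (q-(j+1)) else 0)
          = (if j+1 ≤ q then dcoef (j+1) * (4 * PP (q-(j+1))) else 0) := by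
      intro j _
      by_cases hj : j+1 ≤ q
      · rw [if_pos hj, if_pos hj, ih (q-(j+1)) (by omega)]
      · rw [if_neg hj, if_neg hj]
    rw [Finset.sum_congr rfl hz] at key
    have key2 := add_left_cancel key
    have d0 : dcoef 0 = 1 := by norm_num [dcoef]
    rw [d0, one_mul, one_mul] at key2
    exact key2

lemma Wser_coeff (p q : ℕ) : c p q Wser
    = ∑ i ∈ range 4, ∑ k ∈ range (q+1), uu i k * bz ((p:ℤ) - (i:ℤ) - ((q:ℤ) - (k:ℤ))) := by
  have hW : Wser = U * B := by rw [Wser_eq, Dt_inv, U]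
  rw [hW, c_mul]
  have hL : ∀ i ∈ range (p+1), ∀ k ∈ range (q+1),
      c i k U * c (p-i) (q-k) B = uu i k * bz ((p:ℤ) - (i:ℤ) - ((q:ℤ) - (k:ℤ))) := by
    intro i hi k hk
    rw [Finset.mem_range] at hi hk
    rw [c_B, uu]
    congr 1
    congr 1
    omega
  rw [Finset.sum_congr rfl (fun i hi => Finset.sum_congr rfl (fun k hk => hL i hi k hk))]
  set g : ℕ → ℚ := fun i => ∑ k ∈ range (q+1), uu i k * bz ((p:ℤ) - (i:ℤ) - ((q:ℤ) - (k:ℤ)))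
    with hg
  have h1 : ∑ i ∈ range (p+1), g i = ∑ i ∈ range (p+1+4), g i := by
    apply Finset.sum_subset
    · apply Finset.range_subset_range.mpr; omega
    · intro i _ hi
      rw [Finset.mem_range, not_lt] at hi
      rw [hg]
      apply Finset.sum_eq_zero
      intro k hk
      rw [Finset.mem_range] at hk
      rw [bz_neg (by omega), mul_zero]
  have h2 : ∑ i ∈ range 4, g i = ∑ i ∈ range (p+1+4), g i := by
    apply Finset.sum_subset
    · apply Finset.range_subset_range.mpr; omega
    · intro i _ hi
      rw [Finset.mem_range, not_lt] at hi
      rw [hg]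
      apply Finset.sum_eq_zero
      intro k hk
      rw [uu_ge4 i k hi, zero_mul]
  rw [h1, ← h2]

lemma Ebound (l1 l2 i k : ℕ) (hl : 2*l2 < l1) (hi : i ≤ 3) (hk : k ≤ l2) :
    |bz ((l1:ℤ) - 2*(l2:ℤ) - (i:ℤ) + (k:ℤ)) - (l1:ℚ)^2/4|
      ≤ (2*(l2:ℚ)+8)^2 * ((l1:ℚ)+1) := by
  set n : ℤ := (l1:ℤ) - 2*(l2:ℤ) - (i:ℤ) + (k:ℤ) with hn
  have hb : bz n = ((n:ℚ)+1)*((n:ℚ)+3)/4 + (1 + neg1 n)/8 := by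
    rw [bz, if_pos (by omega)]
  have hnq : ((n:ℤ):ℚ) = (l1:ℚ) - 2*(l2:ℚ) - (i:ℚ) + (k:ℚ) := by
    rw [hn]; push_cast; ring
  have hν : -1 ≤ neg1 n ∧ neg1 n ≤ 1 := abs_le.mp (neg1_abs n)
  have hx : (2*(l2:ℚ) + 1) ≤ (l1:ℚ) := by exact_mod_cast hl
  have hkq : (k:ℚ) ≤ (l2:ℚ) := by exact_mod_cast hk
  have hiq : (i:ℚ) ≤ 3 := by exact_mod_cast hi
  have hk0 : 0 ≤ (k:ℚ) := Nat.cast_nonneg k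
  have hi0 : 0 ≤ (i:ℚ) := Nat.cast_nonneg i
  have hl20 : 0 ≤ (l2:ℚ) := Nat.cast_nonneg l2
  rw [hb, hnq, abs_le]
  constructor
  · nlinarith [sq_nonneg ((l2:ℚ) + 1), sq_nonneg ((l1:ℚ) - 2*(l2:ℚ)), hν.1, hν.2,
      mul_nonneg hl20 (by linarith : (0:ℚ) ≤ (l1:ℚ)), sq_nonneg ((l1:ℚ)+1)]
  · nlinarith [sq_nonneg ((l2:ℚ) + 1), sq_nonneg ((l1:ℚ) - 2*(l2:ℚ)), hν.1, hν.2,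
      mul_nonneg hl20 (by linarith : (0:ℚ) ≤ (l1:ℚ)), sq_nonneg ((l1:ℚ)+1)]

lemma Wseries_eq_Wser : Wseries = Wser := rfl

/-- Corollary 5, fixed λ2 asymptotic: for fixed λ2 and λ1 > 2λ2,
m_{(λ1,λ2)}(T) = λ1²·( λ2⁵/(5!·2⁴) + λ2⁴/(2⁵·3) + 5λ2³/2⁶ + 13λ2²/(4!·2)
+ 1633λ2/(5!·2⁵) + 15/2⁶ + (−1)^{λ2}(λ2/2⁸ + 1/2⁶) ) + O(λ1),
where m_{(λ1,λ2)}(T) is the coefficient of t^{λ1−λ2}v^{λ2} in W, and the constant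
in the O-term may depend on λ2. -/
theorem asymptotics_fixed_l2 (l2 : ℕ) :
    ∃ C : ℚ, 0 < C ∧ ∀ l1 : ℕ, 2 * l2 < l1 →
      |c (l1 - l2) l2 Wseries
        - (l1 : ℚ) ^ 2
            * ((l2 : ℚ) ^ 5 / ((Nat.factorial 5 : ℚ) * 2 ^ 4)
                + (l2 : ℚ) ^ 4 / (2 ^ 5 * 3)
                + 5 * (l2 : ℚ) ^ 3 / 2 ^ 6
                + 13 * (l2 : ℚ) ^ 2 / ((Nat.factorial 4 : ℚ) * 2)
                + 1633 * (l2 : ℚ) / ((Nat.factorial 5 : ℚ) * 2 ^ 5)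
                + 15 / 2 ^ 6
                + (-1 : ℚ) ^ l2 * ((l2 : ℚ) / 2 ^ 8 + 1 / 2 ^ 6))|
      ≤ C * ((l1 : ℚ) + 1) := by
  set S : ℚ := ∑ i ∈ range 4, ∑ k ∈ range (l2+1), |uu i k| with hS
  have hS0 : 0 ≤ S := by
    rw [hS]
    apply Finset.sum_nonneg
    intro i _
    exact Finset.sum_nonneg (fun k _ => abs_nonneg _)
  have hK0 : (0:ℚ) ≤ (2*(l2:ℚ)+8)^2 := sq_nonneg _
  refine ⟨S * (2*(l2:ℚ)+8)^2 + 1, by positivity, ?_⟩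
  intro l1 hl
  have hPexpr : ((l2 : ℚ) ^ 5 / ((Nat.factorial 5 : ℚ) * 2 ^ 4)
                + (l2 : ℚ) ^ 4 / (2 ^ 5 * 3)
                + 5 * (l2 : ℚ) ^ 3 / 2 ^ 6
                + 13 * (l2 : ℚ) ^ 2 / ((Nat.factorial 4 : ℚ) * 2)
                + 1633 * (l2 : ℚ) / ((Nat.factorial 5 : ℚ) * 2 ^ 5)
                + 15 / 2 ^ 6
                + (-1 : ℚ) ^ l2 * ((l2 : ℚ) / 2 ^ 8 + 1 / 2 ^ 6)) = PP l2 := by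
    rw [PP]
    norm_num [Nat.factorial]
  rw [hPexpr, Wseries_eq_Wser, Wser_coeff]
  -- rewrite bz arguments
  have hargs : ∀ i ∈ range 4, ∀ k ∈ range (l2+1),
      uu i k * bz (((l1 - l2 : ℕ):ℤ) - (i:ℤ) - ((l2:ℤ) - (k:ℤ)))
        = uu i k * bz ((l1:ℤ) - 2*(l2:ℤ) - (i:ℤ) + (k:ℤ)) := by
    intro i hi k hk
    rw [Finset.mem_range] at hi hk
    congr 2
    omega
  rw [Finset.sum_congr rfl (fun i hi => Finset.sum_congr rfl (fun k hk => hargs i hi k hk))]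
  -- main term as a sum
  have hsum : ∑ i ∈ range 4, ∑ k ∈ range (l2+1), uu i k = 4 * PP l2 := by
    rw [← ss_eq, ss]
    simp only [us]
    exact Finset.sum_comm
  have hmain : (l1:ℚ)^2 * PP l2
      = ∑ i ∈ range 4, ∑ k ∈ range (l2+1), uu i k * ((l1:ℚ)^2/4) := by
    have h1 : ∑ i ∈ range 4, ∑ k ∈ range (l2+1), uu i k * ((l1:ℚ)^2/4)
        = (∑ i ∈ range 4, ∑ k ∈ range (l2+1), uu i k) * ((l1:ℚ)^2/4) := by
      rw [Finset.sum_mul]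
      exact Finset.sum_congr rfl (fun i _ => (Finset.sum_mul _ _ _).symm)
    rw [h1, hsum]; ring
  rw [hmain, ← Finset.sum_sub_distrib]
  have hstep : ∀ i ∈ range 4,
      ((∑ k ∈ range (l2+1), uu i k * bz ((l1:ℤ) - 2*(l2:ℤ) - (i:ℤ) + (k:ℤ)))
        - ∑ k ∈ range (l2+1), uu i k * ((l1:ℚ)^2/4))
      = ∑ k ∈ range (l2+1),
          uu i k * (bz ((l1:ℤ) - 2*(l2:ℤ) - (i:ℤ) + (k:ℤ)) - (l1:ℚ)^2/4) := by
    intro i _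
    rw [← Finset.sum_sub_distrib]
    exact Finset.sum_congr rfl (fun k _ => (mul_sub _ _ _).symm)
  rw [Finset.sum_congr rfl hstep]
  have habs1 : |∑ i ∈ range 4, ∑ k ∈ range (l2+1),
      uu i k * (bz ((l1:ℤ) - 2*(l2:ℤ) - (i:ℤ) + (k:ℤ)) - (l1:ℚ)^2/4)|
      ≤ ∑ i ∈ range 4, ∑ k ∈ range (l2+1),
          |uu i k| * ((2*(l2:ℚ)+8)^2 * ((l1:ℚ)+1)) := by
    refine (Finset.abs_sum_le_sum_abs _ _).trans ?_
    apply Finset.sum_le_sum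
    intro i hi
    refine (Finset.abs_sum_le_sum_abs _ _).trans ?_
    apply Finset.sum_le_sum
    intro k hk
    rw [Finset.mem_range] at hi hk
    rw [abs_mul]
    have hdiv : bz ((l1:ℤ) - 2*(l2:ℤ) - (i:ℤ) + (k:ℤ)) - (l1:ℚ)^2/4
        = bz ((l1:ℤ) - 2*(l2:ℤ) - (i:ℤ) + (k:ℤ)) - (l1:ℚ)^2/4 := rfl
    have hE := Ebound l1 l2 i k hl (by omega) (by omega)
    exact mul_le_mul_of_nonneg_left hE (abs_nonneg _)
  refine habs1.trans ?_
  have heq : ∑ i ∈ range 4, ∑ k ∈ range (l2+1),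
      |uu i k| * ((2*(l2:ℚ)+8)^2 * ((l1:ℚ)+1))
      = S * ((2*(l2:ℚ)+8)^2 * ((l1:ℚ)+1)) := by
    rw [hS, Finset.sum_mul]
    exact Finset.sum_congr rfl (fun i _ => (Finset.sum_mul _ _ _).symm)
  rw [heq]
  have hx0 : (0:ℚ) ≤ (l1:ℚ) := Nat.cast_nonneg l1
  nlinarith [mul_nonneg hS0 hK0]
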